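/- For every integer d ≥ 3, the constant C(d) = (16/Γ(d/2)) ∫₀^∞ ρ^{d+1} (2(d-2) + 4ρ²)^{-1} e^{-ρ²} dρ satisfies C(d) < 2, and moreover C(2) = 2. -/

import Mathlib

open MeasureTheory Real

lemma aux_int (n : ℕ) : ∫ ρ in Set.Ioi (0 : ℝ), ρ ^ n * Real.exp (-ρ ^ 2)
    = (1 / 2) * Real.Gamma (((n : ℝ) + 1) / 2) := by
  have hq : (-1 : ℝ) < (n : ℝ) := by
    have := Nat.cast_nonneg (α := ℝ) n; linarith
  have h := integral_rpow_mul_exp_neg_rpow (p := 2) (q := (n : ℝ)) two_pos hq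
  rw [show ((n : ℝ) + 1) / 2 = ((n : ℝ) + 1) / 2 from rfl, ← h]
  refine setIntegral_congr_fun measurableSet_Ioi fun x hx => ?_
  rw [Real.rpow_natCast, Real.rpow_two]

lemma aux_integrable (n : ℕ) :
    MeasureTheory.IntegrableOn (fun ρ : ℝ => ρ ^ n * Real.exp (-ρ ^ 2)) (Set.Ioi 0) := by
  have hq : (-1 : ℝ) < (n : ℝ) := by
    have := Nat.cast_nonneg (α := ℝ) n; linarith
  have h := integrableOn_rpow_mul_exp_neg_mul_sq (b := 1) one_pos (s := (n : ℝ)) hq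
  refine h.congr_fun (fun x hx => ?_) measurableSet_Ioi
  beta_reduce
  rw [Real.rpow_natCast, neg_mul, one_mul]

/-- The constant `C(d) = (16/Γ(d/2)) ∫₀^∞ ρ^{d+1}(2(d-2)+4ρ²)^{-1} e^{-ρ²} dρ`
satisfies `C(d) < 2` for `d ≥ 3`, and `C(2) = 2`. -/
theorem C_d_lt_two
    (C : ℕ → ℝ)
    (hC : ∀ d : ℕ, 2 ≤ d → C d = 16 / Real.Gamma ((d : ℝ) / 2) *
      ∫ ρ in Set.Ioi (0 : ℝ),
        ρ ^ (d + 1) * (2 * ((d : ℝ) - 2) + 4 * ρ ^ 2)⁻¹ * Real.exp (-ρ ^ 2)) :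
    (∀ d : ℕ, 3 ≤ d → C d < 2) ∧ C 2 = 2 := by
  constructor
  · intro d hd
    have hd2 : 2 ≤ d := by omega
    rw [hC d hd2]
    set g : ℝ → ℝ := fun ρ =>
      ρ ^ (d + 1) * (2 * ((d : ℝ) - 2) + 4 * ρ ^ 2)⁻¹ * Real.exp (-ρ ^ 2) with hg_def
    set f : ℝ → ℝ := fun ρ => (1 / 4 : ℝ) * (ρ ^ (d - 1) * Real.exp (-ρ ^ 2)) with hf_def
    have hdcast : (3 : ℝ) ≤ (d : ℝ) := by exact_mod_cast hd
    -- pointwise strict inequality on Ioi 0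
    have hlt : ∀ x ∈ Set.Ioi (0 : ℝ), g x < f x := by
      intro x hx
      have hx0 : (0 : ℝ) < x := hx
      have hD : (0 : ℝ) < 4 * x ^ 2 := by positivity
      have hDlt : 4 * x ^ 2 < 2 * ((d : ℝ) - 2) + 4 * x ^ 2 := by nlinarith
      have hinv : (2 * ((d : ℝ) - 2) + 4 * x ^ 2)⁻¹ < (4 * x ^ 2)⁻¹ :=
        inv_strictAnti₀ hD hDlt
      have hpow : x ^ (d + 1) = x ^ (d - 1) * x ^ 2 := by
        rw [← pow_add]; congr 1; omega
      have hpos : (0 : ℝ) < x ^ (d + 1) * Real.exp (-x ^ 2) := by positivity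
      have : g x = (x ^ (d + 1) * Real.exp (-x ^ 2)) *
          (2 * ((d : ℝ) - 2) + 4 * x ^ 2)⁻¹ := by simp [hg_def]; ring
      rw [this]
      have hfx : f x = (x ^ (d + 1) * Real.exp (-x ^ 2)) * (4 * x ^ 2)⁻¹ := by
        simp only [hf_def]
        rw [hpow]
        field_simp
      rw [hfx]
      exact mul_lt_mul_of_pos_left hinv hpos
    -- nonnegativity of g on Ioi 0
    have hg_nonneg : ∀ x ∈ Set.Ioi (0 : ℝ), 0 ≤ g x := by
      intro x hx
      have hx0 : (0 : ℝ) < x := hx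
      have : (0 : ℝ) < 2 * ((d : ℝ) - 2) + 4 * x ^ 2 := by nlinarith
      simp only [hg_def]
      positivity
    -- integrability of f
    have hf_int : MeasureTheory.IntegrableOn f (Set.Ioi (0 : ℝ)) :=
      (aux_integrable (d - 1)).const_mul _
    -- integrability of g
    have hg_meas : MeasureTheory.AEStronglyMeasurable g
        (volume.restrict (Set.Ioi (0 : ℝ))) := by
      apply Measurable.aestronglyMeasurable
      fun_prop
    have hg_int : MeasureTheory.IntegrableOn g (Set.Ioi (0 : ℝ)) := by
      refine hf_int.mono' hg_meas ?_
      filter_upwards [ae_restrict_mem measurableSet_Ioi] with x hx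
      rw [Real.norm_eq_abs, abs_of_nonneg (hg_nonneg x hx)]
      exact (hlt x hx).le
    -- value of ∫ f
    have hIf : ∫ x in Set.Ioi (0 : ℝ), f x = Real.Gamma ((d : ℝ) / 2) / 8 := by
      rw [hf_def]
      rw [MeasureTheory.integral_const_mul, aux_int (d - 1)]
      have : ((d - 1 : ℕ) : ℝ) = (d : ℝ) - 1 := by
        push_cast [Nat.cast_sub (by omega : 1 ≤ d)]; ring
      rw [this]
      ring_nf
    -- strict inequality of integrals
    have hstrict : ∫ x in Set.Ioi (0 : ℝ), g x < ∫ x in Set.Ioi (0 : ℝ), f x := by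
      have hsub : 0 < ∫ x in Set.Ioi (0 : ℝ), (f x - g x) := by
        refine (setIntegral_pos_iff_support_of_nonneg_ae ?_ (hf_int.sub hg_int)).mpr ?_
        · filter_upwards [ae_restrict_mem measurableSet_Ioi] with x hx
          exact sub_nonneg.mpr (hlt x hx).le
        · have hsupset : Set.Ioi (0 : ℝ) ⊆
              Function.support (fun x => f x - g x) ∩ Set.Ioi 0 := fun x hx =>
            ⟨Function.mem_support.mpr (sub_ne_zero.mpr (hlt x hx).ne'), hx⟩
          refine lt_of_lt_of_le ?_ (measure_mono hsupset)
          rw [Real.volume_Ioi]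
          exact ENNReal.zero_lt_top
      rw [MeasureTheory.integral_sub hf_int hg_int] at hsub
      linarith
    have hGamma : 0 < Real.Gamma ((d : ℝ) / 2) :=
      Real.Gamma_pos_of_pos (by linarith)
    calc 16 / Real.Gamma ((d : ℝ) / 2) * ∫ x in Set.Ioi (0 : ℝ), g x
        < 16 / Real.Gamma ((d : ℝ) / 2) * ∫ x in Set.Ioi (0 : ℝ), f x := by
          exact mul_lt_mul_of_pos_left hstrict (by positivity)
      _ = 2 := by rw [hIf]; field_simp; norm_num
  · rw [hC 2 le_rfl]
    have hcongr : ∫ ρ in Set.Ioi (0 : ℝ),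
        ρ ^ (2 + 1) * (2 * ((2 : ℕ) - 2 : ℝ) + 4 * ρ ^ 2)⁻¹ * Real.exp (-ρ ^ 2)
        = ∫ ρ in Set.Ioi (0 : ℝ), (1 / 4 : ℝ) * (ρ ^ 1 * Real.exp (-ρ ^ 2)) := by
      refine setIntegral_congr_fun measurableSet_Ioi fun x hx => ?_
      have hx0 : (0 : ℝ) < x := hx
      have : ((2 : ℕ) : ℝ) = 2 := by norm_num
      field_simp
      ring
    rw [hcongr, MeasureTheory.integral_const_mul, aux_int 1]
    norm_num [Real.Gamma_one]
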